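/- For all nonempty metric spaces X and Y with d̂(X,Y) < ∞, one has D(X,Y) ≤ ln(1 + 2·d̂(X,Y)). -/
import Mathlib

open ENNReal

/-- `f` is an `(A,B)`-quasi-isometric embedding. -/
def QIEmb {X Y : Type*} [MetricSpace X] [MetricSpace Y] (A B : ℝ) (f : X → Y) : Prop :=
  ∀ x x' : X, (1 / A) * dist x x' - B ≤ dist (f x) (f x') ∧
    dist (f x) (f x') ≤ A * dist x x' + B

/-- `X` and `Y` are `(A,B,C)`-quasi-isometric. -/
def QuasiIsometric (X Y : Type*) [MetricSpace X] [MetricSpace Y] (A B C : ℝ) : Prop :=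
  ∃ (f : X → Y) (g : Y → X), QIEmb A B f ∧ QIEmb A B g ∧
    (∀ x : X, dist (g (f x)) x ≤ C) ∧ (∀ y : Y, dist (f (g y)) y ≤ C)

/-- The quasi-isometric distance `d̂`. -/
noncomputable def qiDist (X Y : Type*) [MetricSpace X] [MetricSpace Y] : ℝ≥0∞ :=
  sInf {e : ℝ≥0∞ | ∃ r : ℝ, 0 < r ∧ e = ENNReal.ofReal r ∧ QuasiIsometric X Y (1 + r) r r}

/-- A correspondence between X and Y: both projections are surjective. -/
def IsCorrespondence {X Y : Type*} (R : Set (X × Y)) : Prop :=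
  (∀ x : X, ∃ y : Y, (x, y) ∈ R) ∧ (∀ y : Y, ∃ x : X, (x, y) ∈ R)

/-- The quasi-isometric distortion of a correspondence, in [0,∞]. -/
noncomputable def qDis {X Y : Type*} [MetricSpace X] [MetricSpace Y]
    (R : Set (X × Y)) : ℝ≥0∞ :=
  sInf {e : ℝ≥0∞ | ∃ r : ℝ, 0 < r ∧ e = ENNReal.ofReal r ∧
    ∀ p ∈ R, ∀ q ∈ R,
      Real.exp (-r) * dist p.2 q.2 - Real.exp r + 1 ≤ dist p.1 q.1 ∧
      dist p.1 q.1 ≤ Real.exp r * dist p.2 q.2 + Real.exp (2 * r) - Real.exp r}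

/-- The distance D, infimum of quasi-isometric distortions of correspondences. -/
noncomputable def Ddist (X Y : Type*) [MetricSpace X] [MetricSpace Y] : ℝ≥0∞ :=
  ⨅ R : {R : Set (X × Y) // IsCorrespondence R}, qDis R.1

lemma qie_lower {A B a b : ℝ} (hA : 0 < A) (h : 1/A * a - B ≤ b) : a ≤ A*b + A*B := by
  have h1 : 1/A * a ≤ b + B := by linarith
  have h2 : a = A * (1/A * a) := by field_simp
  calc a = A*(1/A*a) := h2
    _ ≤ A*(b+B) := mul_le_mul_of_nonneg_left h1 hA.le
    _ = A*b + A*B := by ring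

lemma alg {r a b : ℝ} (hr : 0 < r)
    (hlo : b - 2*r*(1+2*r) ≤ (1+2*r)*a) (hup : a ≤ (1+2*r)*b + 2*r*(1+2*r)) :
    (1+2*r)⁻¹ * b - (1+2*r) + 1 ≤ a ∧ a ≤ (1+2*r)*b + (1+2*r)*(1+2*r) - (1+2*r) := by
  have hpos : (0:ℝ) < 1+2*r := by linarith
  constructor
  · have h1 : (1+2*r)⁻¹ * b ≤ a + 2*r := by
      rw [inv_mul_le_iff₀ hpos]; nlinarith
    linarith
  · nlinarith

/-- The mixed-case estimate. -/
lemma mixed_est {X Y : Type*} [MetricSpace X] [MetricSpace Y] {r : ℝ} {f : X → Y} {g : Y → X}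
    (hr : 0 < r) (hf : QIEmb (1+r) r f) (hfg : ∀ y, dist (f (g y)) y ≤ r)
    (x : X) (y' : Y) :
    dist (f x) y' - 2*r*(1+2*r) ≤ (1+2*r) * dist x (g y') ∧
    dist x (g y') ≤ (1+2*r) * dist (f x) y' + 2*r*(1+2*r) := by
  have h1r : (0:ℝ) < 1+r := by linarith
  obtain ⟨hflo, hfup⟩ := hf x (g y')
  have hcl : dist (f (g y')) y' ≤ r := hfg y'
  have ht1 : dist (f x) y' ≤ dist (f x) (f (g y')) + dist (f (g y')) y' := dist_triangle _ _ _
  have ht2 : dist (f x) (f (g y')) ≤ dist (f x) y' + dist y' (f (g y')) := dist_triangle _ _ _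
  have hsym : dist y' (f (g y')) = dist (f (g y')) y' := dist_comm _ _
  have hq : dist x (g y') ≤ (1+r) * dist (f x) (f (g y')) + (1+r)*r := qie_lower h1r hflo
  have hd1 : (0:ℝ) ≤ dist (f x) y' := dist_nonneg
  have hd2 : (0:ℝ) ≤ dist x (g y') := dist_nonneg
  constructor
  · nlinarith
  · nlinarith

lemma key_main {X Y : Type*} [MetricSpace X] [MetricSpace Y]
    {r : ℝ} (hr : 0 < r) (h : QuasiIsometric X Y (1+r) r r) :
    Ddist X Y ≤ ENNReal.ofReal (Real.log (1+2*r)) := by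
  obtain ⟨f, g, hf, hg, _, hfg⟩ := h
  have h1r : (0:ℝ) < 1+r := by linarith
  have hpos : (0:ℝ) < 1+2*r := by linarith
  set R : Set (X × Y) := (Set.range fun x => (x, f x)) ∪ (Set.range fun y => (g y, y)) with hR_def
  have hR : IsCorrespondence R :=
    ⟨fun x => ⟨f x, Or.inl ⟨x, rfl⟩⟩, fun y => ⟨g y, Or.inr ⟨y, rfl⟩⟩⟩
  have h1 : Ddist X Y ≤ qDis R := iInf_le (fun R : {R : Set (X × Y) // IsCorrespondence R} => qDis R.1) ⟨R, hR⟩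
  refine h1.trans (sInf_le ?_)
  set s := Real.log (1+2*r) with hs_def
  have hes : Real.exp s = 1+2*r := Real.exp_log hpos
  have hens : Real.exp (-s) = (1+2*r)⁻¹ := by rw [Real.exp_neg, hes]
  have he2s : Real.exp (2*s) = (1+2*r)*(1+2*r) := by
    rw [two_mul, Real.exp_add, hes]
  refine ⟨s, Real.log_pos (by linarith), rfl, ?_⟩
  intro p hp q hq
  rw [hens, hes, he2s]
  have main : ∀ p' q' : X × Y, p' ∈ R → q' ∈ R →
      dist p'.2 q'.2 - 2*r*(1+2*r) ≤ (1+2*r) * dist p'.1 q'.1 ∧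
      dist p'.1 q'.1 ≤ (1+2*r) * dist p'.2 q'.2 + 2*r*(1+2*r) := by
    rintro p' q' (⟨x, rfl⟩ | ⟨y, rfl⟩) (⟨x', rfl⟩ | ⟨y', rfl⟩) <;> simp only
    · -- (x, f x), (x', f x')
      obtain ⟨hflo, hfup⟩ := hf x x'
      have hq := qie_lower h1r hflo
      have hd1 : (0:ℝ) ≤ dist (f x) (f x') := dist_nonneg
      have hd2 : (0:ℝ) ≤ dist x x' := dist_nonneg
      constructor <;> nlinarith
    · -- (x, f x), (g y', y')
      exact mixed_est hr hf hfg x y'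
    · -- (g y, y), (x', f x')
      have := mixed_est hr hf hfg x' y
      rw [dist_comm (f x') y, dist_comm x' (g y)] at this
      exact this
    · -- (g y, y), (g y', y')
      obtain ⟨hglo, hgup⟩ := hg y y'
      have hq := qie_lower h1r hglo
      have hd1 : (0:ℝ) ≤ dist y y' := dist_nonneg
      have hd2 : (0:ℝ) ≤ dist (g y) (g y') := dist_nonneg
      constructor <;> nlinarith
  obtain ⟨hlo, hup⟩ := main p q hp hq
  exact alg hr hlo hup

/-- D(X,Y) ≤ ln(1 + 2·d̂(X,Y)) whenever the quasi-isometric distance is finite. -/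
theorem Ddist_le_log_qiDist
    (X Y : Type*) [MetricSpace X] [MetricSpace Y] [Nonempty X] [Nonempty Y]
    (hfin : qiDist X Y < ⊤) :
    Ddist X Y ≤ ENNReal.ofReal (Real.log (1 + 2 * (qiDist X Y).toReal)) := by
  set t := (qiDist X Y).toReal with ht_def
  have ht : 0 ≤ t := ENNReal.toReal_nonneg
  apply ENNReal.le_of_forall_pos_le_add
  intro δ hδ _
  have hδR : (0:ℝ) < (δ:ℝ) := hδ
  set ε : ℝ := (1+2*t) * (Real.exp δ - 1) / 2 with hε_def
  have hexp : (1:ℝ) < Real.exp δ := by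
    have := Real.add_one_le_exp (δ:ℝ); linarith
  have hεpos : 0 < ε := by
    have h1 : (0:ℝ) < 1+2*t := by linarith
    have h2 : (0:ℝ) < Real.exp (δ:ℝ) - 1 := by linarith
    positivity
  have hlt : qiDist X Y < qiDist X Y + ENNReal.ofReal ε := by
    refine ENNReal.lt_add_right hfin.ne ?_
    simp [ENNReal.ofReal_pos.mpr hεpos |>.ne']
  rw [qiDist, sInf_lt_iff] at hlt
  obtain ⟨e, ⟨r, hr, rfl, hQI⟩, hre⟩ := hlt
  rw [← qiDist] at hre
  have hofReal : qiDist X Y + ENNReal.ofReal ε = ENNReal.ofReal (t + ε) := by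
    rw [ENNReal.ofReal_add ht hεpos.le, ht_def, ENNReal.ofReal_toReal hfin.ne]
  rw [hofReal] at hre
  have hr_le : r < t + ε := by
    rwa [ENNReal.ofReal_lt_ofReal_iff (by linarith)] at hre
  have key := key_main hr hQI
  refine key.trans ?_
  have hlog : Real.log (1+2*r) ≤ Real.log (1+2*t) + δ := by
    have h2 : (1+2*r) ≤ (1+2*t) * Real.exp δ := by nlinarith
    calc Real.log (1+2*r) ≤ Real.log ((1+2*t)*Real.exp δ) :=
          Real.log_le_log (by linarith) h2
      _ = Real.log (1+2*t) + δ := by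
          rw [Real.log_mul (by linarith) (Real.exp_ne_zero _), Real.log_exp]
  calc ENNReal.ofReal (Real.log (1+2*r)) ≤ ENNReal.ofReal (Real.log (1+2*t) + δ) :=
        ENNReal.ofReal_le_ofReal hlog
    _ ≤ ENNReal.ofReal (Real.log (1+2*t)) + ENNReal.ofReal δ := ENNReal.ofReal_add_le
    _ = ENNReal.ofReal (Real.log (1 + 2 * t)) + δ := by rw [ENNReal.ofReal_coe_nnreal]
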